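/- Let d ≥ 2 and 1 < p < ∞. Let Ω ⊆ ℝ^d be an exterior domain whose boundary ∂Ω has finite (d-1)-dimensional Hausdorff measure H, and let v be C¹ on an open set containing the closure of Ω, with v ≥ 0 on Ω and ∫_{Ω∩B_r}(|v|^p + |∇v|^p) dx < ∞ for all r > 0. Let h : ∂Ω × ℝ → ℝ be such that x ↦ h(x, v(x)) is H-integrable on ∂Ω and h(x, v(x))·v(x) ≥ 0 for H-a.e. x ∈ ∂Ω. Assume the weak Robin formulation: ∫_Ω |∇v(x)|^{p-2} ∇v(x)·∇ψ(x) dx + ∫_{∂Ω} h(x, v(x)) ψ(x) dH(x) = 0 for every function ψ that is C¹ on an open set containing the closure of Ω and has bounded support. If v(x) → 0 as |x| → ∞, then v ≡ 0 on Ω. (Theorem 1, case of Robin/Neumann boundary conditions.) -/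

import Mathlib

open MeasureTheory Filter Metric
open scoped RealInnerProductSpace


private lemma sqmax_hasDerivAt (ε t : ℝ) :
    HasDerivAt (fun s : ℝ => (max (s - ε) 0) ^ 2) (2 * max (t - ε) 0) t := by
  rcases lt_trichotomy t ε with ht | ht | ht
  · have hmax : max (t - ε) 0 = 0 := max_eq_right (by linarith)
    rw [hmax, mul_zero]
    have hev : (fun s : ℝ => (max (s - ε) 0) ^ 2) =ᶠ[nhds t] fun _ => (0:ℝ) := by
      filter_upwards [Iio_mem_nhds ht] with s hs
      rw [max_eq_right (by simp only [Set.mem_Iio] at hs; linarith)]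
      ring
    exact (hasDerivAt_const t (0:ℝ)).congr_of_eventuallyEq hev
  · subst ht
    have hmax : max (t - t) 0 = 0 := by simp
    rw [hmax, mul_zero, hasDerivAt_iff_isLittleO]
    refine Asymptotics.isLittleO_iff.2 fun c hc => ?_
    filter_upwards [Metric.ball_mem_nhds t hc] with s hs
    rw [Metric.mem_ball, Real.dist_eq] at hs
    have h1 : max (s - t) 0 ≤ |s - t| := max_le (le_abs_self _) (abs_nonneg _)
    have h0 : (0:ℝ) ≤ max (s - t) 0 := le_max_right _ _
    have h2 : (max (s - t) 0) ^ 2 ≤ |s - t| * |s - t| := by nlinarith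
    have h3 : |s - t| * |s - t| ≤ c * |s - t| :=
      mul_le_mul_of_nonneg_right (le_of_lt hs) (abs_nonneg _)
    simp only [hmax, smul_zero, sub_zero, Real.norm_eq_abs]
    have h4 : |(max (s - t) 0) ^ 2| = (max (s - t) 0) ^ 2 := abs_of_nonneg (by positivity)
    rw [show (0:ℝ)^2 = 0 by norm_num, sub_zero]
    calc |(max (s - t) 0) ^ 2| = (max (s - t) 0) ^ 2 := h4
      _ ≤ c * |s - t| := le_trans h2 h3
  · have hmax : max (t - ε) 0 = t - ε := max_eq_left (by linarith)
    rw [hmax]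
    have hd : HasDerivAt (fun s : ℝ => (s - ε) ^ 2) (2 * (t - ε)) t := by
      have := ((hasDerivAt_id t).sub_const ε).pow 2
      simpa [Pi.pow_def] using this
    refine hd.congr_of_eventuallyEq ?_
    filter_upwards [Ioi_mem_nhds ht] with s hs
    rw [max_eq_left (by simp only [Set.mem_Ioi] at hs; linarith)]

private lemma sqmax_contDiff (ε : ℝ) :
    ContDiff ℝ 1 (fun s : ℝ => (max (s - ε) 0) ^ 2) := by
  rw [contDiff_one_iff_deriv]
  refine ⟨fun t => (sqmax_hasDerivAt ε t).differentiableAt, ?_⟩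
  have hderiv : deriv (fun s : ℝ => (max (s - ε) 0) ^ 2) = fun t => 2 * max (t - ε) 0 :=
    funext fun t => (sqmax_hasDerivAt ε t).deriv
  rw [hderiv]
  exact continuous_const.mul ((continuous_id.sub continuous_const).max continuous_const)

private lemma const_on_of_fderiv_zero {E : Type*} [NormedAddCommGroup E] [NormedSpace ℝ E]
    {f : E → ℝ} {s : Set E} (hs : IsOpen s) (hconn : IsPreconnected s)
    (hf : ∀ x ∈ s, HasFDerivAt f (0 : E →L[ℝ] ℝ) x) :
    ∀ x ∈ s, ∀ y ∈ s, f x = f y := by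
  intro x hx y hy
  haveI : PreconnectedSpace s := Subtype.preconnectedSpace hconn
  have hloc : IsLocallyConstant (fun z : s => f z.1) := by
    rw [IsLocallyConstant.iff_exists_open]
    rintro ⟨z, hz⟩
    obtain ⟨r, hr, hball⟩ := Metric.isOpen_iff.1 hs z hz
    refine ⟨Subtype.val ⁻¹' Metric.ball z r,
      Metric.isOpen_ball.preimage continuous_subtype_val, show z ∈ Metric.ball z r from Metric.mem_ball_self hr, ?_⟩
    rintro ⟨w, hw⟩ hwball
    refine (convex_ball z r).is_const_of_fderivWithin_eq_zero
      (fun u hu => ((hf u (hball hu)).differentiableAt).differentiableWithinAt)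
      (fun u hu => ?_) (by simpa using hwball) (mem_ball_self hr)
    rw [fderivWithin_of_isOpen Metric.isOpen_ball hu]
    exact (hf u (hball hu)).fderiv
  exact hloc.apply_eq_of_preconnectedSpace ⟨x, hx⟩ ⟨y, hy⟩


/-- An exterior domain of `ℝ^d`: a connected open set whose complement is
compact and nonempty. -/
def IsExteriorDomain {d : ℕ} (Ω : Set (EuclideanSpace ℝ (Fin d))) : Prop :=
  IsOpen Ω ∧ IsConnected Ω ∧ IsCompact Ωᶜ ∧ Ωᶜ.Nonempty

/-- Theorem 1, case of Robin/Neumann boundary conditions. -/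
theorem liouville_robin {d : ℕ} (hd : 2 ≤ d) (p : ℝ) (hp : 1 < p)
    (Ω : Set (EuclideanSpace ℝ (Fin d))) (hΩ : IsExteriorDomain Ω)
    -- the (d-1)-dimensional Hausdorff measure restricted to the boundary of Ω
    (H : Measure (EuclideanSpace ℝ (Fin d)))
    (hH : H = (μH[(d : ℝ) - 1]).restrict (frontier Ω))
    (hfin : μH[(d : ℝ) - 1] (frontier Ω) < ⊤)
    -- v is C¹ on an open set containing the closure of Ω
    (v : EuclideanSpace ℝ (Fin d) → ℝ) (U : Set (EuclideanSpace ℝ (Fin d)))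
    (hU : IsOpen U) (hUΩ : closure Ω ⊆ U) (hvC1 : ContDiffOn ℝ 1 v U)
    (hvpos : ∀ x ∈ Ω, 0 ≤ v x)
    (hvloc : ∀ r > (0 : ℝ),
      IntegrableOn (fun x => |v x| ^ p + ‖gradient v x‖ ^ p) (Ω ∩ ball 0 r))
    (h : EuclideanSpace ℝ (Fin d) → ℝ → ℝ)
    (hhint : Integrable (fun x => h x (v x)) H)
    (hhsign : ∀ᵐ x ∂H, 0 ≤ h x (v x) * v x)
    -- weak Robin formulation
    (hweak : ∀ (ψ : EuclideanSpace ℝ (Fin d) → ℝ)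
        (V : Set (EuclideanSpace ℝ (Fin d))),
      IsOpen V → closure Ω ⊆ V → ContDiffOn ℝ 1 ψ V →
      Bornology.IsBounded (Function.support ψ) →
      (∫ x in Ω, ‖gradient v x‖ ^ (p - 2) * ⟪gradient v x, gradient ψ x⟫)
        + ∫ x, h x (v x) * ψ x ∂H = 0)
    (hvlim : Tendsto v (cocompact (EuclideanSpace ℝ (Fin d))) (nhds 0)) :
    ∀ x ∈ Ω, v x = 0 := by
  obtain ⟨hΩopen, hΩconn, hΩc_cpt, -⟩ := hΩ
  have hΩU : Ω ⊆ U := subset_closure.trans hUΩ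
  have hp0 : (0:ℝ) < p := lt_trans one_pos hp
  have hvcont : ContinuousOn v U := hvC1.continuousOn
  have hgcont : ContinuousOn (fun x => gradient v x) U := by
    have hf := hvC1.continuousOn_fderiv_of_isOpen hU le_rfl
    exact ((InnerProductSpace.toDual ℝ
      (EuclideanSpace ℝ (Fin d))).symm.continuous.comp_continuousOn hf)
  -- main claim: for every ε > 0, v ≤ ε on Ω
  have key : ∀ ε, 0 < ε → ∀ x ∈ Ω, v x ≤ ε := by
    intro ε hε
    obtain ⟨K, hKc, hK⟩ := Filter.mem_cocompact.1 (hvlim (Metric.ball_mem_nhds (0:ℝ) hε))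
    have hvsmall : ∀ x, x ∉ K → |v x| < ε := by
      intro x hx
      have := hK hx
      simpa [Real.dist_eq] using this
    set c : EuclideanSpace ℝ (Fin d) → ℝ := fun x => 2 * max (v x - ε) 0 with hc
    set ψ : EuclideanSpace ℝ (Fin d) → ℝ := fun x => (max (v x - ε) 0) ^ 2 with hψdef
    have hψC1 : ContDiffOn ℝ 1 ψ U := (sqmax_contDiff ε).comp_contDiffOn hvC1
    have hψzero : ∀ x, x ∉ K → ψ x = 0 := by
      intro x hx
      have h1 := hvsmall x hx
      have h2 : max (v x - ε) 0 = 0 := max_eq_right (by cases abs_lt.1 h1; linarith)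
      simp only [hψdef, h2]
      ring
    have hsupp : Function.support ψ ⊆ K := fun x hx => by
      by_contra hxK; exact hx (hψzero x hxK)
    -- gradient of ψ
    have hgradψ : ∀ x ∈ U, HasGradientAt ψ (c x • gradient v x) x := by
      intro x hx
      have hvd : DifferentiableAt ℝ v x :=
        (hvC1.contDiffAt (hU.mem_nhds hx)).differentiableAt one_ne_zero
      have hF : HasFDerivAt v
          (InnerProductSpace.toDual ℝ (EuclideanSpace ℝ (Fin d)) (gradient v x)) x :=
        hasGradientAt_iff_hasFDerivAt.1 hvd.hasGradientAt
      have hcomp := (sqmax_hasDerivAt ε (v x)).comp_hasFDerivAt x hF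
      rw [hasGradientAt_iff_hasFDerivAt, _root_.map_smul]
      exact hcomp
    have hgradψ' : ∀ x ∈ U, gradient ψ x = c x • gradient v x :=
      fun x hx => (hgradψ x hx).gradient
    -- the rewritten first integrand
    set f : EuclideanSpace ℝ (Fin d) → ℝ := fun x => c x * ‖gradient v x‖ ^ p with hf
    have hcnonneg : ∀ x, 0 ≤ c x := fun x => by
      simp only [hc]; positivity
    have hfnonneg : ∀ x, 0 ≤ f x := fun x => by
      simp only [hf]
      exact mul_nonneg (hcnonneg x) (Real.rpow_nonneg (norm_nonneg _) p)
    have hAeq : (∫ x in Ω, ‖gradient v x‖ ^ (p - 2) * ⟪gradient v x, gradient ψ x⟫)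
        = ∫ x in Ω, f x := by
      refine setIntegral_congr_fun hΩopen.measurableSet (fun x hx => ?_)
      rw [hgradψ' x (hΩU hx), real_inner_smul_right, real_inner_self_eq_norm_sq]
      rcases eq_or_lt_of_le (norm_nonneg (gradient v x)) with h0 | h0
      · have hn : ‖gradient v x‖ = 0 := h0.symm
        simp [hf, hn, Real.zero_rpow (ne_of_gt hp0)]
      · have e1 : (‖gradient v x‖ ^ 2 : ℝ) = ‖gradient v x‖ ^ (2:ℝ) :=
          (Real.rpow_natCast _ 2).symm
        have e2 : ‖gradient v x‖ ^ (p - 2) * ‖gradient v x‖ ^ (2:ℝ)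
            = ‖gradient v x‖ ^ p := by
          rw [← Real.rpow_add h0]; ring_nf
        simp only [hf]
        rw [e1, ← mul_assoc, mul_comm (‖gradient v x‖ ^ (p-2)) (c x), mul_assoc, e2]
    -- sign of the boundary term
    have hB : 0 ≤ ∫ x, h x (v x) * ψ x ∂H := by
      refine integral_nonneg_of_ae ?_
      filter_upwards [hhsign] with x hx
      rcases le_or_gt (v x) ε with hv | hv
      · have h2 : max (v x - ε) 0 = 0 := max_eq_right (by linarith)
        simp only [hψdef, h2]
        ring_nf
        exact le_rfl
      · have hvp : 0 < v x := lt_trans hε hv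
        have hh : 0 ≤ h x (v x) := by
          by_contra hcon
          push_neg at hcon
          nlinarith
        exact mul_nonneg hh (by positivity)
    have hA : 0 ≤ ∫ x in Ω, f x :=
      setIntegral_nonneg hΩopen.measurableSet (fun x _ => hfnonneg x)
    have hwk := hweak ψ U hU hUΩ hψC1 (hKc.isBounded.subset hsupp)
    rw [hAeq] at hwk
    have hA0 : ∫ x in Ω, f x = 0 := by linarith
    -- integrability of f on Ω
    obtain ⟨r₀, hKr₀⟩ := hKc.isBounded.subset_ball 0
    have hr0 : (0:ℝ) < max r₀ 1 := lt_of_lt_of_le one_pos (le_max_right _ _)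
    have hKr : K ⊆ ball 0 (max r₀ 1) := hKr₀.trans (ball_subset_ball (le_max_left _ _))
    have hCcpt : IsCompact (K ∩ closure Ω) := hKc.inter_right isClosed_closure
    obtain ⟨M, hM⟩ := hCcpt.exists_bound_of_continuousOn
      (hvcont.mono (fun x hx => hUΩ hx.2))
    set M' : ℝ := 2 * (|M| + 1) with hM'
    have h1c : ContinuousOn c Ω := by
      have hsub : ContinuousOn (fun x => v x - ε) Ω := (hvcont.mono hΩU).sub continuousOn_const
      exact continuousOn_const.mul (hsub.sup continuousOn_const)
    have h2c : ContinuousOn (fun x => ‖gradient v x‖ ^ p) Ω :=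
      (hgcont.mono hΩU).norm.rpow_const (fun x _ => Or.inr (le_of_lt hp0))
    have hfcontΩ : ContinuousOn f Ω := h1c.mul h2c
    have hmeasΩK : MeasurableSet (Ω ∩ K) := hΩopen.measurableSet.inter hKc.measurableSet
    have hboundInt : IntegrableOn
        (fun x => M' * (|v x| ^ p + ‖gradient v x‖ ^ p)) (Ω ∩ K) := by
      have hbi : IntegrableOn (fun x => M' * (|v x| ^ p + ‖gradient v x‖ ^ p))
          (Ω ∩ ball 0 (max r₀ 1)) := (hvloc (max r₀ 1) hr0).const_mul M'
      exact hbi.mono_set (fun x hx => ⟨hx.1, hKr hx.2⟩)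
    have hintK : IntegrableOn f (Ω ∩ K) := by
      refine Integrable.mono' hboundInt
        ((hfcontΩ.mono Set.inter_subset_left).aestronglyMeasurable hmeasΩK) ?_
      refine (ae_restrict_iff' hmeasΩK).2 (Filter.Eventually.of_forall (fun x hx => ?_))
      have hvb : ‖v x‖ ≤ M := hM x ⟨hx.2, subset_closure hx.1⟩
      rw [Real.norm_eq_abs] at hvb
      have hvb2 : v x ≤ |M| := le_trans (le_trans (le_abs_self _) hvb) (le_abs_self M)
      have hb1 : c x ≤ M' := by
        have hmx : max (v x - ε) 0 ≤ |M| + 1 := max_le (by linarith) (by positivity)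
        calc c x = 2 * max (v x - ε) 0 := rfl
          _ ≤ 2 * (|M| + 1) := by linarith
      have hgp : (0:ℝ) ≤ ‖gradient v x‖ ^ p := Real.rpow_nonneg (norm_nonneg _) _
      have hvp' : (0:ℝ) ≤ |v x| ^ p := Real.rpow_nonneg (abs_nonneg _) _
      have hM'0 : (0:ℝ) ≤ M' := by positivity
      rw [Real.norm_of_nonneg (hfnonneg x)]
      calc f x = c x * ‖gradient v x‖ ^ p := rfl
        _ ≤ M' * ‖gradient v x‖ ^ p := mul_le_mul_of_nonneg_right hb1 hgp
        _ ≤ M' * (|v x| ^ p + ‖gradient v x‖ ^ p) := by nlinarith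
    have hintD : IntegrableOn f (Ω \ K) := by
      refine (integrableOn_zero).congr_fun (fun x hx => ?_)
        (hΩopen.measurableSet.diff hKc.measurableSet)
      have h2 : max (v x - ε) 0 = 0 :=
        max_eq_right (by cases abs_lt.1 (hvsmall x hx.2); linarith)
      simp only [hf, hc, h2]
      simp
    have hint : IntegrableOn f Ω := by
      have hcover : Ω = (Ω ∩ K) ∪ (Ω \ K) := by
        ext z
        by_cases hz : z ∈ K <;> simp [Set.mem_inter_iff, Set.mem_diff, hz]
      rw [hcover]
      exact hintK.union hintD
    have hae : ∀ᵐ x, x ∈ Ω → f x = 0 := by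
      have h0' : (0 : EuclideanSpace ℝ (Fin d) → ℝ) ≤ f := fun x => hfnonneg x
      have hres := (integral_eq_zero_iff_of_nonneg h0' hint).1 hA0
      have := (ae_restrict_iff' hΩopen.measurableSet).1 hres
      filter_upwards [this] with x hx using hx
    have hg0 : ∀ x ∈ Ω, ε < v x → gradient v x = 0 := by
      intro x0 hx0 hvx0
      by_contra hgx0
      have hO1 : IsOpen (Ω ∩ v ⁻¹' Set.Ioi ε) :=
        (hvcont.mono hΩU).isOpen_inter_preimage hΩopen isOpen_Ioi
      have hO2 : IsOpen ((Ω ∩ v ⁻¹' Set.Ioi ε) ∩ (fun x => gradient v x) ⁻¹' ({0}ᶜ)) :=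
        (hgcont.mono (fun y hy => hΩU hy.1)).isOpen_inter_preimage hO1 isOpen_compl_singleton
      have hxF : x0 ∈ (Ω ∩ v ⁻¹' Set.Ioi ε) ∩ (fun x => gradient v x) ⁻¹' ({0}ᶜ) :=
        ⟨⟨hx0, hvx0⟩, hgx0⟩
      have hnull : volume {x | ¬ (x ∈ Ω → f x = 0)} = 0 := ae_iff.1 hae
      have hsub : ((Ω ∩ v ⁻¹' Set.Ioi ε) ∩ (fun x => gradient v x) ⁻¹' ({0}ᶜ))
          ⊆ {x | ¬ (x ∈ Ω → f x = 0)} := by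
        rintro z ⟨⟨hzΩ, hzv⟩, hzg⟩ hcon2
        have hfz := hcon2 hzΩ
        have hzv' : (0:ℝ) < v z - ε := by
          have : ε < v z := hzv
          linarith
        have hcy : 0 < c z := by
          have hmx : max (v z - ε) 0 = v z - ε := max_eq_left (le_of_lt hzv')
          simp only [hc, hmx]
          linarith
        have hgy : 0 < ‖gradient v z‖ ^ p :=
          Real.rpow_pos_of_pos (norm_pos_iff.2 hzg) p
        have hfpos : 0 < f z := mul_pos hcy hgy
        rw [hfz] at hfpos
        exact lt_irrefl 0 hfpos
      exact (hO2.measure_pos volume ⟨x0, hxF⟩).ne'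
        (measure_mono_null hsub hnull)
    have hψ0deriv : ∀ x ∈ Ω, HasFDerivAt ψ (0 : EuclideanSpace ℝ (Fin d) →L[ℝ] ℝ) x := by
      intro x hx
      have hgr := hgradψ x (hΩU hx)
      have hzero : c x • gradient v x = 0 := by
        rcases le_or_gt (v x) ε with hv | hv
        · have h2 : max (v x - ε) 0 = 0 := max_eq_right (by linarith)
          simp only [hc, h2]
          simp
        · rw [hg0 x hx hv, smul_zero]
      rw [hzero] at hgr
      have hfd := hasGradientAt_iff_hasFDerivAt.1 hgr
      simpa using hfd
    have hψconst := const_on_of_fderiv_zero hΩopen hΩconn.isPreconnected hψ0deriv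
    obtain ⟨R, hR⟩ := (hΩc_cpt.union hKc).isBounded.subset_ball 0
    set y : EuclideanSpace ℝ (Fin d) :=
      EuclideanSpace.single (⟨0, by omega⟩ : Fin d) (|R| + 1) with hy
    have hynorm : ‖y‖ = |R| + 1 := by
      rw [hy, EuclideanSpace.norm_single, Real.norm_eq_abs, abs_of_nonneg (by positivity)]
    have hynot : y ∉ Ωᶜ ∪ K := by
      intro hmem
      have hyb := hR hmem
      rw [mem_ball_zero_iff, hynorm] at hyb
      have : R ≤ |R| := le_abs_self R
      linarith
    have hyΩ : y ∈ Ω := by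
      by_contra hcon
      exact hynot (Or.inl hcon)
    have hyK : y ∉ K := fun hk => hynot (Or.inr hk)
    intro x hx
    have hψx : ψ x = 0 := (hψconst x hx y hyΩ).trans (hψzero y hyK)
    have h2 : max (v x - ε) 0 = 0 := by
      have hsq : (max (v x - ε) 0) ^ 2 = 0 := by simpa [hψdef] using hψx
      exact pow_eq_zero_iff (two_ne_zero) |>.1 hsq
    by_contra hcon
    push_neg at hcon
    have hmx : max (v x - ε) 0 = v x - ε := max_eq_left (by linarith)
    rw [hmx] at h2
    linarith
  intro x hx
  have hle : v x ≤ 0 := by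
    by_contra hcon
    push_neg at hcon
    have := key (v x / 2) (by linarith) x hx
    linarith
  exact le_antisymm hle (hvpos x hx)
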